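/- With Ψ and Φ as defined, Φ ∘ Ψ = id on normalized equivariant n-cochains: for any equivariant φ, Φ(Ψφ)(h, a⁰,…,aⁿ) = φ(h, a⁰,…,aⁿ). -/

import Mathlib

noncomputable section

open TensorProduct

variable {H A : Type} [Ring H] [HopfAlgebra ℂ H] [Ring A] [Algebra ℂ A]

/-- `sweedler N Δ₁ Δ₂ k g F` is the Sweedler sum `Σ F (g₍₁₎, …, g₍ₖ₊₁₎)`, computed
from a chosen finite representation `comul g = Σ_{i < N g} Δ₁ g i ⊗ Δ₂ g i` of the
comultiplication. -/
def sweedler (N : H → ℕ) (Δ₁ Δ₂ : H → ℕ → H) :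
    (k : ℕ) → H → ((Fin (k+1) → H) → ℂ) → ℂ
  | 0, g, F => F ![g]
  | k+1, g, F => ∑ i ∈ Finset.range (N g),
      sweedler N Δ₁ Δ₂ k (Δ₂ g i) (fun v => F (Fin.cons (Δ₁ g i) v))

/-- The multiplication of the crossed product `A ⋊ H`, as a linear map on
`(A ⊗ H) ⊗ (A ⊗ H)`; on pure tensors it is `(a ⊗ h)(b ⊗ g) = a h₍₁₎(b) ⊗ h₍₂₎ g`. -/
def cpMul (ρ : H →ₗ[ℂ] A →ₗ[ℂ] A) :
    (A ⊗[ℂ] H) ⊗[ℂ] (A ⊗[ℂ] H) →ₗ[ℂ] A ⊗[ℂ] H :=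
  (LinearMap.rTensor H (LinearMap.mul' ℂ A)) ∘ₗ
  (TensorProduct.assoc ℂ A A H).symm.toLinearMap ∘ₗ
  (LinearMap.lTensor A (TensorProduct.map (TensorProduct.lift ρ) (LinearMap.mul' ℂ H))) ∘ₗ
  (LinearMap.lTensor A (TensorProduct.tensorTensorTensorComm ℂ H H A H).toLinearMap) ∘ₗ
  (LinearMap.lTensor A (LinearMap.rTensor (A ⊗[ℂ] H) (Coalgebra.comul (R := ℂ)))) ∘ₗ
  (TensorProduct.assoc ℂ A H (A ⊗[ℂ] H)).toLinearMap

/-- The tuple obtained from `x` by replacing the pair `(xʲ, xʲ⁺¹)` by the single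
entry `y` (used with `y = xʲ xʲ⁺¹` for the `j`-th face map). -/
def faceTup {α : Type} {n : ℕ} (j : Fin (n+1)) (y : α) (x : Fin (n+2) → α) :
    Fin (n+1) → α :=
  fun k => if (k : ℕ) < (j : ℕ) then x k.castSucc else if k = j then y else x k.succ

/-- The `i`-th term of the product `(p.1 ⊗ p.2)(q.1 ⊗ q.2)` in `A ⋊ H`, for the chosen
representation of the comultiplication: `p.1 · (Δ₁ p.2 i)(q.1) ⊗ (Δ₂ p.2 i) q.2`. -/
def cpPairTerm (Δ₁ Δ₂ : H → ℕ → H) (ρ : H →ₗ[ℂ] A →ₗ[ℂ] A) (p q : A × H) (i : ℕ) :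
    A × H :=
  (p.1 * ρ (Δ₁ p.2 i) q.1, Δ₂ p.2 i * q.2)

/-- The Hochschild coboundary of a cochain on the crossed product `A ⋊ H`. -/
def cpb (ρ : H →ₗ[ℂ] A →ₗ[ℂ] A) {n : ℕ} (f : (Fin (n+1) → A ⊗[ℂ] H) → ℂ) :
    (Fin (n+2) → A ⊗[ℂ] H) → ℂ := fun x =>
  (∑ j : Fin (n+1), (-1 : ℂ) ^ (j : ℕ) *
      f (faceTup j (cpMul ρ (x j.castSucc ⊗ₜ[ℂ] x j.succ)) x))
  + (-1 : ℂ) ^ (n+1) *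
      f (fun k => if (k : ℕ) = 0 then cpMul ρ (x (Fin.last (n+1)) ⊗ₜ[ℂ] x 0)
                  else x k.castSucc)

/-- `f` vanishes whenever some argument in position `≥ 1` lies in the subalgebra
`1 ⊗ H` of `A ⋊ H`. -/
def HConstVanish {m : ℕ} (f : (Fin m → A ⊗[ℂ] H) → ℂ) : Prop :=
  ∀ x : Fin m → A ⊗[ℂ] H,
    (∃ j : Fin m, 0 < (j : ℕ) ∧ ∃ h : H, x j = (1 : A) ⊗ₜ[ℂ] h) → f x = 0

/-- An `H`-constant cochain on `A ⋊ H`: both `f` and `bf` vanish whenever some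
argument in position `≥ 1` lies in `1 ⊗ H`. -/
def IsHConstant (ρ : H →ₗ[ℂ] A →ₗ[ℂ] A) {n : ℕ}
    (f : MultilinearMap ℂ (fun _ : Fin (n+1) => A ⊗[ℂ] H) ℂ) : Prop :=
  HConstVanish ⇑f ∧ HConstVanish (cpb ρ ⇑f)

/-- Auxiliary recursion for `Ψ`: processes the pairs `x¹, …, xᵏ`, keeping an
accumulated Hopf algebra element `g`; at each step `Δg = g₍₁₎ ⊗ g₍₂₎` is split, the
current slot becomes `g₍₁₎(aʲ)` and the accumulator becomes `g₍₂₎ hʲ`. -/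
def psiAux (N : H → ℕ) (Δ₁ Δ₂ : H → ℕ → H) (ρ : H →ₗ[ℂ] A →ₗ[ℂ] A) :
    (k : ℕ) → H → (Fin k → A × H) → (H → (Fin k → A) → ℂ) → ℂ
  | 0, g, _, F => F g ![]
  | k+1, g, x, F => ∑ i ∈ Finset.range (N g),
      psiAux N Δ₁ Δ₂ ρ k (Δ₂ g i * (x 0).2) (fun j => x j.succ)
        (fun h v => F h (Fin.cons (ρ (Δ₁ g i) (x 0).1) v))

/-- The value of `Ψφ` on the elementary tensors `a⁰ ⊗ h⁰, …, aⁿ ⊗ hⁿ`: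
`Ψ(φ)(a⁰⊗h⁰, …, aⁿ⊗hⁿ) = φ(h⁰₍ₙ₊₁₎ ⋯ h^{n-1}₍₂₎ hⁿ, a⁰, h⁰₍₁₎(a¹), …,
h⁰₍ₙ₎⋯h^{n-1}₍₁₎(aⁿ))`. -/
def psiV (N : H → ℕ) (Δ₁ Δ₂ : H → ℕ → H) (ρ : H →ₗ[ℂ] A →ₗ[ℂ] A) {n : ℕ}
    (φf : H → (Fin (n+1) → A) → ℂ) (x : Fin (n+1) → A × H) : ℂ :=
  psiAux N Δ₁ Δ₂ ρ n ((x 0).2) (fun j => x j.succ)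
    (fun h v => φf h (Fin.cons (x 0).1 v))

/-- The equivariance condition `φ(S(g₍₂₎) h g₍₁₎, a⁰, …, aⁿ) =
φ(h, g₍₁₎(a⁰), …, g₍ₙ₊₁₎(aⁿ))` for a cochain `φ : H ⊗ A^{⊗(n+1)} → ℂ`. -/
def IsEquivariant (N : H → ℕ) (Δ₁ Δ₂ : H → ℕ → H) (ρ : H →ₗ[ℂ] A →ₗ[ℂ] A) {n : ℕ}
    (φf : H → (Fin (n+1) → A) → ℂ) : Prop :=
  ∀ (g h : H) (a : Fin (n+1) → A),
    sweedler N Δ₁ Δ₂ 1 g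
      (fun ℓ => φf (HopfAlgebra.antipode (R := ℂ) (ℓ 1) * h * ℓ 0) a)
      = sweedler N Δ₁ Δ₂ n g (fun ℓ => φf h (fun j => ρ (ℓ j) (a j)))

/-- The cyclic operator on equivariant cochains:
`t φ(h, a⁰, …, aⁿ) = φ(h₍₂₎, S⁻¹(h₍₁₎)(aⁿ), a⁰, …, aⁿ⁻¹)`. -/
def cycOpEq (N : H → ℕ) (Δ₁ Δ₂ : H → ℕ → H) (ρ : H →ₗ[ℂ] A →ₗ[ℂ] A)
    (Sinv : H →ₗ[ℂ] H) {n : ℕ} (φf : H → (Fin (n+1) → A) → ℂ) :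
    H → (Fin (n+1) → A) → ℂ := fun h a =>
  sweedler N Δ₁ Δ₂ 1 h (fun ℓ =>
    φf (ℓ 1) (Fin.cons (ρ (Sinv (ℓ 0)) (a (Fin.last n))) (fun j : Fin n => a j.castSucc)))

/-- The map `Φ`: `(Φf)(h, a⁰, …, aⁿ) = f(a⁰ ⊗ 1, …, aⁿ⁻¹ ⊗ 1, aⁿ ⊗ h)`. -/
def phiV {n : ℕ} (f : MultilinearMap ℂ (fun _ : Fin (n+1) => A ⊗[ℂ] H) ℂ) :
    H → (Fin (n+1) → A) → ℂ := fun h a =>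
  f (fun i => if i = Fin.last n then a i ⊗ₜ[ℂ] h else a i ⊗ₜ[ℂ] (1 : H))


section Statement16Aux

/-- Evaluation of a `0`-ary multilinear map, as a linear map. -/
def evalEmpty : MultilinearMap ℂ (fun _ : Fin 0 => H) ℂ →ₗ[ℂ] ℂ where
  toFun L := L ![]
  map_add' _ _ := rfl
  map_smul' _ _ := rfl

/-- The canonical (representation-independent) value of the Sweedler sum of a
multilinear functional, as a linear map in `g`. -/
def swL : (k : ℕ) → (MultilinearMap ℂ (fun _ : Fin (k+1) => H) ℂ) →ₗ[ℂ] H →ₗ[ℂ] ℂ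
  | 0 => (LinearMap.llcomp ℂ H _ ℂ evalEmpty) ∘ₗ
      (multilinearCurryLeftEquiv (R := ℂ) (M := fun _ : Fin 1 => H) (M₂ := ℂ)).toLinearMap
  | k+1 => (LinearMap.lcomp ℂ ℂ (Coalgebra.comul (R := ℂ))) ∘ₗ
      (TensorProduct.lift.equiv (RingHom.id ℂ) H H ℂ).toLinearMap ∘ₗ
      (LinearMap.llcomp ℂ H _ (H →ₗ[ℂ] ℂ) (swL k)) ∘ₗ
      (multilinearCurryLeftEquiv (R := ℂ) (M := fun _ : Fin (k+2) => H) (M₂ := ℂ)).toLinearMap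

theorem swL_zero_apply (M : MultilinearMap ℂ (fun _ : Fin 1 => H) ℂ) (g : H) :
    swL 0 M g = M ![g] := rfl

theorem swL_succ_apply (k : ℕ) (M : MultilinearMap ℂ (fun _ : Fin (k+2) => H) ℂ) (g : H) :
    swL (k+1) M g =
      TensorProduct.lift ((swL k) ∘ₗ M.curryLeft) (Coalgebra.comul (R := ℂ) g) := by
  have h1 : (TensorProduct.lift.equiv (RingHom.id ℂ) H H ℂ) ((swL k) ∘ₗ M.curryLeft)
      = TensorProduct.lift ((swL k) ∘ₗ M.curryLeft) := by
    apply TensorProduct.ext'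
    intro x y
    simp
  rw [swL]
  show (TensorProduct.lift.equiv (RingHom.id ℂ) H H ℂ) ((swL k) ∘ₗ M.curryLeft)
      (Coalgebra.comul (R := ℂ) g) = _
  rw [h1]

theorem sweedler_eq_swL (N : H → ℕ) (Δ₁ Δ₂ : H → ℕ → H)
    (hrep : ∀ g : H, (Coalgebra.comul (R := ℂ) g : H ⊗[ℂ] H) =
      ∑ i ∈ Finset.range (N g), Δ₁ g i ⊗ₜ[ℂ] Δ₂ g i) :
    ∀ (k : ℕ) (g : H) (M : MultilinearMap ℂ (fun _ : Fin (k+1) => H) ℂ),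
      sweedler N Δ₁ Δ₂ k g ⇑M = swL k M g := by
  intro k
  induction k with
  | zero => intro g M; rfl
  | succ k ih =>
    intro g M
    rw [swL_succ_apply, hrep, map_sum]
    show (∑ i ∈ Finset.range (N g),
        sweedler N Δ₁ Δ₂ k (Δ₂ g i) fun v => M (Fin.cons (Δ₁ g i) v)) = _
    refine Finset.sum_congr rfl fun i _ => ?_
    have h1 : (fun v => M (Fin.cons (Δ₁ g i) v)) = ⇑(M.curryLeft (Δ₁ g i)) := rfl
    rw [h1, ih]
    rw [TensorProduct.lift.tmul]
    rfl

theorem swL_one : ∀ (k : ℕ) (M : MultilinearMap ℂ (fun _ : Fin (k+1) => H) ℂ),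
    swL k M 1 = M (fun _ => 1) := by
  intro k
  induction k with
  | zero =>
    intro M
    rw [swL_zero_apply]
    congr 1
    funext i
    fin_cases i <;> rfl
  | succ k ih =>
    intro M
    rw [swL_succ_apply]
    have h1 : (Coalgebra.comul (R := ℂ) (1 : H) : H ⊗[ℂ] H) = (1 : H) ⊗ₜ[ℂ] (1 : H) := by
      simpa [Algebra.TensorProduct.one_def] using Bialgebra.comul_one ℂ (A := H)
    rw [h1, TensorProduct.lift.tmul]
    show swL k (M.curryLeft 1) 1 = _
    rw [ih]
    show M (Fin.cons 1 fun _ => 1) = M fun _ => 1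
    congr 1
    funext i
    refine Fin.cases rfl (fun j => rfl) i

/-- The multilinear functional on `H^{k+1}` obtained by plugging the Sweedler legs
into `φ(· * h, a⁰, ·(a¹), …, ·(aᵏ))`. -/
def Gml {m : ℕ} (ρ : H →ₗ[ℂ] A →ₗ[ℂ] A)
    (φ : H →ₗ[ℂ] MultilinearMap ℂ (fun _ : Fin (m+2) => A) ℂ)
    (h : H) (a : Fin (m+2) → A) :
    MultilinearMap ℂ (fun _ : Fin (m+2) => H) ℂ where
  toFun ℓ := φ (ℓ (Fin.last (m+1)) * h)
      (Fin.cons (a 0) (fun j : Fin (m+1) => ρ (ℓ j.castSucc) (a j.succ)))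
  map_update_add' := by
    intro dec ℓ i x y
    have hdec : dec = instDecidableEqFin (m+2) := Subsingleton.elim _ _
    subst hdec
    induction i using Fin.lastCases with
    | last =>
      have ht : ∀ z : H,
          (fun j : Fin (m+1) =>
            ρ ((Function.update ℓ (Fin.last (m+1)) z) j.castSucc) (a j.succ))
          = fun j => ρ (ℓ j.castSucc) (a j.succ) := by
        intro z; funext j
        rw [Function.update_of_ne (Fin.castSucc_lt_last j).ne]
      simp [ht, add_mul, map_add]
    | cast j0 =>
      have hl : ∀ z : H,
          Function.update ℓ j0.castSucc z (Fin.last (m+1)) = ℓ (Fin.last (m+1)) := by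
        intro z; rw [Function.update_of_ne (Fin.castSucc_lt_last j0).ne']
      have ht : ∀ z : H,
          (fun j : Fin (m+1) =>
            ρ ((Function.update ℓ j0.castSucc z) j.castSucc) (a j.succ))
          = Function.update (fun j => ρ (ℓ j.castSucc) (a j.succ)) j0 (ρ z (a j0.succ)) := by
        intro z; funext j
        rcases eq_or_ne j j0 with rfl | hne
        · simp
        · rw [Function.update_of_ne (by simpa [Fin.castSucc_inj] using hne),
            Function.update_of_ne hne]
      simp only [hl, ht, Fin.cons_update, map_add, LinearMap.add_apply]
      exact (φ _).map_update_add _ _ _ _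
  map_update_smul' := by
    intro dec ℓ i c x
    have hdec : dec = instDecidableEqFin (m+2) := Subsingleton.elim _ _
    subst hdec
    induction i using Fin.lastCases with
    | last =>
      have ht : ∀ z : H,
          (fun j : Fin (m+1) =>
            ρ ((Function.update ℓ (Fin.last (m+1)) z) j.castSucc) (a j.succ))
          = fun j => ρ (ℓ j.castSucc) (a j.succ) := by
        intro z; funext j
        rw [Function.update_of_ne (Fin.castSucc_lt_last j).ne]
      simp [ht, smul_mul_assoc, map_smul]
    | cast j0 =>
      have hl : ∀ z : H,
          Function.update ℓ j0.castSucc z (Fin.last (m+1)) = ℓ (Fin.last (m+1)) := by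
        intro z; rw [Function.update_of_ne (Fin.castSucc_lt_last j0).ne']
      have ht : ∀ z : H,
          (fun j : Fin (m+1) =>
            ρ ((Function.update ℓ j0.castSucc z) j.castSucc) (a j.succ))
          = Function.update (fun j => ρ (ℓ j.castSucc) (a j.succ)) j0 (ρ z (a j0.succ)) := by
        intro z; funext j
        rcases eq_or_ne j j0 with rfl | hne
        · simp
        · rw [Function.update_of_ne (by simpa [Fin.castSucc_inj] using hne),
            Function.update_of_ne hne]
      simp only [hl, ht, Fin.cons_update, map_smul, LinearMap.smul_apply]
      exact (φ _).map_update_smul _ _ _ _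

theorem psiAux_eq (N : H → ℕ) (Δ₁ Δ₂ : H → ℕ → H) (ρ : H →ₗ[ℂ] A →ₗ[ℂ] A) (h : H) :
    ∀ (k : ℕ) (g : H) (x : Fin (k+1) → A × H) (F : H → (Fin (k+1) → A) → ℂ),
      (∀ j : Fin (k+1), j ≠ Fin.last k → (x j).2 = 1) → (x (Fin.last k)).2 = h →
      psiAux N Δ₁ Δ₂ ρ (k+1) g x F =
        sweedler N Δ₁ Δ₂ (k+1) g
          (fun ℓ => F (ℓ (Fin.last (k+1)) * h) (fun j => ρ (ℓ j.castSucc) (x j).1)) := by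
  intro k
  induction k with
  | zero =>
    intro g x F _ hlast
    show (∑ i ∈ Finset.range (N g), _) = ∑ i ∈ Finset.range (N g), _
    refine Finset.sum_congr rfl fun i _ => ?_
    have e2 : (fun j : Fin 1 =>
          ρ ((Fin.cons (Δ₁ g i) ![Δ₂ g i] : Fin 2 → H) j.castSucc) (x j).1)
        = Fin.cons (ρ (Δ₁ g i) (x (0 : Fin 1)).1) ![] := by
      funext j
      have hj : j = 0 := Fin.fin_one_eq_zero j
      subst hj
      rfl
    show F (Δ₂ g i * (x 0).2) (Fin.cons (ρ (Δ₁ g i) (x 0).1) ![]) = _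
    rw [show (x (0 : Fin 1)).2 = h from hlast]
    show _ = F ((Fin.cons (Δ₁ g i) ![Δ₂ g i] : Fin 2 → H) (Fin.last 1) * h)
        (fun j : Fin 1 => ρ ((Fin.cons (Δ₁ g i) ![Δ₂ g i] : Fin 2 → H) j.castSucc) (x j).1)
    rw [e2, show (Fin.last 1) = Fin.succ 0 from rfl, Fin.cons_succ, Matrix.cons_val_zero]
  | succ k ih =>
    intro g x F hmid hlast
    show (∑ i ∈ Finset.range (N g), _) = ∑ i ∈ Finset.range (N g), _
    refine Finset.sum_congr rfl fun i _ => ?_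
    have h0 : (x 0).2 = 1 := hmid 0 (Fin.last_pos).ne
    show psiAux N Δ₁ Δ₂ ρ (k+1) (Δ₂ g i * (x 0).2) (fun j => x j.succ)
        (fun h' v => F h' (Fin.cons (ρ (Δ₁ g i) (x 0).1) v)) = _
    rw [h0, mul_one]
    rw [ih (Δ₂ g i) (fun j => x j.succ) _
      (fun j hj => hmid j.succ (by
        intro hc
        exact hj (Fin.succ_injective _ (by rw [hc, Fin.succ_last]))))
      (by
        show (x (Fin.last k).succ).2 = h
        rw [Fin.succ_last]
        exact hlast)]
    congr 1
    funext ℓ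
    have e1 : (Fin.cons (Δ₁ g i) ℓ : Fin (k+3) → H) (Fin.last (k+2)) = ℓ (Fin.last (k+1)) := by
      rw [← Fin.succ_last, Fin.cons_succ]
    have e2 : (fun j : Fin (k+2) =>
          ρ ((Fin.cons (Δ₁ g i) ℓ : Fin (k+3) → H) j.castSucc) (x j).1)
        = Fin.cons (ρ (Δ₁ g i) (x 0).1)
            (fun j : Fin (k+1) => ρ (ℓ j.castSucc) (x j.succ).1) := by
      funext j
      refine Fin.cases rfl (fun j' => ?_) j
      rw [Fin.cons_succ, ← Fin.succ_castSucc, Fin.cons_succ]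
    show F (ℓ (Fin.last (k+1)) * h)
        (Fin.cons (ρ (Δ₁ g i) (x 0).1) (fun j : Fin (k+1) => ρ (ℓ j.castSucc) (x j.succ).1))
      = F ((Fin.cons (Δ₁ g i) ℓ : Fin (k+3) → H) (Fin.last (k+2)) * h)
        (fun j : Fin (k+2) => ρ ((Fin.cons (Δ₁ g i) ℓ : Fin (k+3) → H) j.castSucc) (x j).1)
    rw [e1, e2]

end Statement16Aux

/-- `Φ ∘ Ψ = id` on normalized equivariant cochains:
`Φ(Ψφ)(h, a⁰,…,aⁿ) = Ψφ(a⁰ ⊗ 1, …, aⁿ⁻¹ ⊗ 1, aⁿ ⊗ h) = φ(h, a⁰,…,aⁿ)`. -/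
theorem statement16 {n : ℕ}
    (N : H → ℕ) (Δ₁ Δ₂ : H → ℕ → H)
    (hrep : ∀ g : H, (Coalgebra.comul (R := ℂ) g : H ⊗[ℂ] H) =
      ∑ i ∈ Finset.range (N g), Δ₁ g i ⊗ₜ[ℂ] Δ₂ g i)
    (ρ : H →ₗ[ℂ] A →ₗ[ℂ] A)
    (hρ_one : ρ 1 = LinearMap.id)
    (hρ_mul : ∀ g h : H, ρ (g * h) = ρ g ∘ₗ ρ h)
    (hact_mul : ∀ (h : H) (a b : A),
      ρ h (a * b) = ∑ i ∈ Finset.range (N h), ρ (Δ₁ h i) a * ρ (Δ₂ h i) b)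
    (hact_one : ∀ h : H, ρ h 1 = (Coalgebra.counit (R := ℂ) h) • (1 : A))
    (φ : H →ₗ[ℂ] MultilinearMap ℂ (fun _ : Fin (n+1) => A) ℂ)
    (hequiv : IsEquivariant N Δ₁ Δ₂ ρ (fun h a => φ h a))
    (hnorm : ∀ (h : H) (a : Fin (n+1) → A), (∃ j, a j = 1) → φ h a = 0) :
    ∀ (h : H) (a : Fin (n+1) → A),
      psiV N Δ₁ Δ₂ ρ (fun h' a' => φ h' a')
        (fun i => (a i, if i = Fin.last n then h else 1)) = φ h a := by
  intro h a
  cases n with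
  | zero =>
    show φ (if (0 : Fin 1) = Fin.last 0 then h else 1) (Fin.cons (a 0) ![]) = φ h a
    rw [if_pos (show (0 : Fin 1) = Fin.last 0 from rfl)]
    congr 1
    funext j
    have hj : j = 0 := Fin.fin_one_eq_zero j
    subst hj
    rfl
  | succ m =>
    show psiAux N Δ₁ Δ₂ ρ (m+1) (if (0 : Fin (m+2)) = Fin.last (m+1) then h else 1)
        (fun j : Fin (m+1) => (a j.succ, if j.succ = Fin.last (m+1) then h else 1))
        (fun h' v => φ h' (Fin.cons (a 0) v)) = φ h a
    rw [if_neg (Fin.last_pos).ne]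
    rw [psiAux_eq N Δ₁ Δ₂ ρ h m 1
      (fun j : Fin (m+1) => (a j.succ, if j.succ = Fin.last (m+1) then h else 1))
      (fun h' v => φ h' (Fin.cons (a 0) v))
      (fun j hj => by
        show (if j.succ = Fin.last (m+1) then h else 1) = 1
        rw [if_neg]
        intro hc
        exact hj (Fin.succ_injective _ (by rw [hc, Fin.succ_last])))
      (by
        show (if (Fin.last m).succ = Fin.last (m+1) then h else 1) = h
        rw [if_pos (Fin.succ_last m)])]
    have hG : (fun ℓ : Fin (m+2) → H =>
          (fun h' v => φ h' (Fin.cons (a 0) v)) (ℓ (Fin.last (m+1)) * h)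
            (fun j : Fin (m+1) => ρ (ℓ j.castSucc)
              ((a j.succ, if j.succ = Fin.last (m+1) then h else 1) : A × H).1))
        = ⇑(Gml ρ φ h a) := rfl
    rw [hG, sweedler_eq_swL N Δ₁ Δ₂ hrep, swL_one]
    show φ ((1 : H) * h) (Fin.cons (a 0) (fun j : Fin (m+1) => ρ 1 (a j.succ))) = φ h a
    rw [one_mul, hρ_one]
    show φ h (Fin.cons (a 0) (fun j : Fin (m+1) => a j.succ)) = φ h a
    congr 1
    funext j
    exact Fin.cases rfl (fun _ => rfl) j

end
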